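/- Let f be a non-constant meromorphic function on ℂ and P[f] a differential polynomial generated by f, of degree d̄(P), lower degree d_(P), weight Γ_P and order k, and set μ = max_j (Γ_{M_j} − d(M_j)). Then N(r, ∞; P[f]/f^{d̄(P)}) ≤ (Γ_P − d̄(P))·N̄(r,∞;f) + (d̄(P) − d_(P))·N(r,0;f|≥k+1) + μ·N̄(r,0;f|≥k+1) + d̄(P)·N(r,0;f|≤k) + S(r,f). -/

import Mathlib

open Filter MeasureTheory Classical

open scoped Classical

noncomputable section

namespace Nevanlinna

/-- The multiplicity of `z` as a zero of the meromorphic function `g`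
(zero if `g` is not meromorphic at `z`, or has a pole or nonzero value there,
or vanishes identically near `z`). -/
def zeroMult (g : ℂ → ℂ) (z : ℂ) : ℕ :=
  if h : MeromorphicAt g z then ((meromorphicOrderAt g z).untopD 0).toNat else 0

/-- The multiplicity of `z` as a pole of the meromorphic function `g`. -/
def poleMult (g : ℂ → ℂ) (z : ℂ) : ℕ :=
  if h : MeromorphicAt g z then (-((meromorphicOrderAt g z).untopD 0)).toNat else 0

/-- Unintegrated counting function: the number of points of the closed disc of
radius `r` about the origin, counted according to the multiplicity function `ν`. -/
def nCount (ν : ℂ → ℕ) (r : ℝ) : ℝ :=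
  ∑ᶠ z ∈ Metric.closedBall (0 : ℂ) r, (ν z : ℝ)

/-- Integrated (Nevanlinna) counting function associated to a multiplicity function `ν`:
`N(r) = ν(0)·log r + ∫₀ʳ (n(t) - ν(0))/t dt`. -/
def NCount (ν : ℂ → ℕ) (r : ℝ) : ℝ :=
  (ν 0 : ℝ) * Real.log r + ∫ t in (0 : ℝ)..r, (nCount ν t - (ν 0 : ℝ)) / t

/-- `N(r,0;g)` : integrated counting function of the zeros of `g`, with multiplicity. -/
def Nzero (g : ℂ → ℂ) : ℝ → ℝ := NCount (zeroMult g)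

/-- `N̄(r,0;g)` : reduced integrated counting function of the zeros of `g`. -/
def NzeroRed (g : ℂ → ℂ) : ℝ → ℝ := NCount (fun z => min 1 (zeroMult g z))

/-- `N̄(r,0;g|≥p)` : reduced counting function of the zeros of `g` of multiplicity `≥ p`. -/
def NzeroRedGe (g : ℂ → ℂ) (p : ℕ) : ℝ → ℝ :=
  NCount (fun z => if p ≤ zeroMult g z then 1 else 0)

/-- `N(r,0;g|≥p)` : counting function (with multiplicity) of the zeros of `g`
of multiplicity `≥ p`. -/
def NzeroGe (g : ℂ → ℂ) (p : ℕ) : ℝ → ℝ :=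
  NCount (fun z => if p ≤ zeroMult g z then zeroMult g z else 0)

/-- `N(r,0;g|≤p)` : counting function (with multiplicity) of the zeros of `g`
of multiplicity `≤ p`. -/
def NzeroLe (g : ℂ → ℂ) (p : ℕ) : ℝ → ℝ :=
  NCount (fun z => if zeroMult g z ≤ p then zeroMult g z else 0)

/-- `N_p(r,0;g) = N̄(r,0;g) + N̄(r,0;g|≥2) + ⋯ + N̄(r,0;g|≥p)`. -/
def NzeroTrunc (g : ℂ → ℂ) (p : ℕ) (r : ℝ) : ℝ :=
  ∑ q ∈ Finset.Icc 1 p, NzeroRedGe g q r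

/-- `N(r,∞;g)` : integrated counting function of the poles of `g`, with multiplicity. -/
def Npole (g : ℂ → ℂ) : ℝ → ℝ := NCount (poleMult g)

/-- `N̄(r,∞;g)` : reduced integrated counting function of the poles of `g`. -/
def NpoleRed (g : ℂ → ℂ) : ℝ → ℝ := NCount (fun z => min 1 (poleMult g z))

/-- The positive part of the logarithm, `log⁺ x = max (log x) 0`. -/
def plog (x : ℝ) : ℝ := max (Real.log x) 0

/-- The Nevanlinna proximity function `m(r,g)`. -/
def prox (g : ℂ → ℂ) (r : ℝ) : ℝ :=
  (2 * Real.pi)⁻¹ * ∫ θ in (0 : ℝ)..(2 * Real.pi), plog ‖g (r * Complex.exp (θ * Complex.I))‖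

/-- The Nevanlinna characteristic function `T(r,g) = m(r,g) + N(r,∞;g)`. -/
def charT (g : ℂ → ℂ) (r : ℝ) : ℝ := prox g r + Npole g r

/-- `s = S(r,f)` : `s(r)/T(r,f) → 0` as `r → ∞` outside a set `E` of finite
Lebesgue measure. -/
def IsSmall (s : ℝ → ℝ) (f : ℂ → ℂ) : Prop :=
  ∃ E : Set ℝ, volume E < ⊤ ∧
    Tendsto (fun r => s r / charT f r) (atTop ⊓ Filter.principal Eᶜ) (nhds 0)

/-- `a` is a small function of `f` : `T(r,a) = S(r,f)`. -/
def IsSmallFunction (a f : ℂ → ℂ) : Prop := IsSmall (charT a) f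

/-- The deficiency `δ_p(0,g) = 1 - limsup_{r→∞} N_p(r,0;g)/T(r,g)`. -/
def deltaP (p : ℕ) (g : ℂ → ℂ) : ℝ :=
  1 - Filter.limsup (fun r => NzeroTrunc g p r / charT g r) Filter.atTop

/-- The deficiency `δ(a,f) = 1 - limsup_{r→∞} N(r,a;f)/T(r,f)` of a (small) function `a`. -/
def deltaFn (a f : ℂ → ℂ) : ℝ :=
  1 - Filter.limsup (fun r => Nzero (fun z => f z - a z) r / charT f r) Filter.atTop

/-- `Θ(0,g) = 1 - limsup_{r→∞} N̄(r,0;g)/T(r,g)`. -/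
def theta0 (g : ℂ → ℂ) : ℝ :=
  1 - Filter.limsup (fun r => NzeroRed g r / charT g r) Filter.atTop

/-- `Θ(∞,g) = 1 - limsup_{r→∞} N̄(r,∞;g)/T(r,g)`. -/
def thetaInf (g : ℂ → ℂ) : ℝ :=
  1 - Filter.limsup (fun r => NpoleRed g r / charT g r) Filter.atTop

/-- The differential monomial `M[f] = f^{n₀}·(f')^{n₁}⋯(f^{(k)})^{n_k}`. -/
def diffMono {k : ℕ} (n : Fin (k + 1) → ℕ) (f : ℂ → ℂ) (z : ℂ) : ℂ :=
  ∏ i : Fin (k + 1), (iteratedDeriv i f z) ^ (n i)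

/-- The degree `d(M) = Σ_{i=0}^k n_i` of a differential monomial. -/
def monoDeg {k : ℕ} (n : Fin (k + 1) → ℕ) : ℕ := ∑ i : Fin (k + 1), n i

/-- The weight `Γ_M = Σ_{i=0}^k (i+1)·n_i` of a differential monomial. -/
def monoWt {k : ℕ} (n : Fin (k + 1) → ℕ) : ℕ := ∑ i : Fin (k + 1), (i.1 + 1) * n i

/-- The differential polynomial `P[f] = Σ_{j=1}^t b_j·M_j[f]`. -/
def diffPoly {t k : ℕ} (b : Fin t → ℂ → ℂ) (M : Fin t → Fin (k + 1) → ℕ)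
    (f : ℂ → ℂ) (z : ℂ) : ℂ :=
  ∑ j : Fin t, b j z * diffMono (M j) f z

/-- The functions `g` and `h` share the value `0` with weight `l`, i.e.
`E_l(0;g) = E_l(0;h)` : at every point the multiplicities as zeros of `g` and of `h`,
both truncated at level `l+1`, coincide. -/
def ShareZero (l : ℕ) (g h : ℂ → ℂ) : Prop :=
  ∀ z : ℂ, min (l + 1) (zeroMult g z) = min (l + 1) (zeroMult h z)

/-- `f` is a non-constant meromorphic function on the complex plane. -/
def NonconstMero (f : ℂ → ℂ) : Prop :=
  MeromorphicOn f Set.univ ∧ ¬ ∃ c : ℂ, ∀ z, f z = c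

end Nevanlinna

open Nevanlinna

-- ===== auxiliary machinery =====


/-- `f` admits a representation `(z-x)^m * g` with `g` analytic near `x`. -/
def HasRep (f : ℂ → ℂ) (x : ℂ) (m : ℤ) : Prop :=
  ∃ g : ℂ → ℂ, AnalyticAt ℂ g x ∧ ∀ᶠ z in nhdsWithin x {x}ᶜ, f z = (z - x) ^ m * g z

namespace HasRep

lemma meromorphicAt {f : ℂ → ℂ} {x : ℂ} {m : ℤ} (h : HasRep f x m) : MeromorphicAt f x := by
  obtain ⟨g, hg, he⟩ := h
  refine MeromorphicAt.iff_eventuallyEq_zpow_smul_analyticAt.2 ⟨m, g, hg, ?_⟩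
  simpa [smul_eq_mul] using he

lemma mono {f : ℂ → ℂ} {x : ℂ} {m m' : ℤ} (h : HasRep f x m) (hm : m' ≤ m) :
    HasRep f x m' := by
  obtain ⟨g, hg, he⟩ := h
  refine ⟨fun z => (z - x) ^ (m - m').toNat * g z,
    ((analyticAt_id.sub analyticAt_const).pow _).mul hg, ?_⟩
  filter_upwards [he, self_mem_nhdsWithin] with z hz hz'
  have hzx : z - x ≠ 0 := sub_ne_zero.2 hz'
  rw [hz, ← mul_assoc, ← zpow_natCast ((z : ℂ) - x), ← zpow_add₀ hzx]
  congr 2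
  omega

lemma mul {f₁ f₂ : ℂ → ℂ} {x : ℂ} {m₁ m₂ : ℤ} (h₁ : HasRep f₁ x m₁) (h₂ : HasRep f₂ x m₂) :
    HasRep (fun z => f₁ z * f₂ z) x (m₁ + m₂) := by
  obtain ⟨g₁, hg₁, he₁⟩ := h₁
  obtain ⟨g₂, hg₂, he₂⟩ := h₂
  refine ⟨fun z => g₁ z * g₂ z, hg₁.mul hg₂, ?_⟩
  filter_upwards [he₁, he₂, self_mem_nhdsWithin] with z h1 h2 hz'
  have hzx : z - x ≠ 0 := sub_ne_zero.2 hz'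
  rw [h1, h2, zpow_add₀ hzx]; ring

lemma const (c : ℂ) (x : ℂ) : HasRep (fun _ => c) x 0 :=
  ⟨fun _ => c, analyticAt_const, by filter_upwards with z; simp⟩

lemma pow {f : ℂ → ℂ} {x : ℂ} {m : ℤ} (h : HasRep f x m) (n : ℕ) :
    HasRep (fun z => f z ^ n) x (n * m) := by
  induction n with
  | zero => simpa using const 1 x
  | succ n ih =>
      have := ih.mul h
      simpa [pow_succ, add_mul, one_mul] using this

lemma add {f₁ f₂ : ℂ → ℂ} {x : ℂ} {m : ℤ} (h₁ : HasRep f₁ x m) (h₂ : HasRep f₂ x m) :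
    HasRep (fun z => f₁ z + f₂ z) x m := by
  obtain ⟨g₁, hg₁, he₁⟩ := h₁
  obtain ⟨g₂, hg₂, he₂⟩ := h₂
  refine ⟨fun z => g₁ z + g₂ z, hg₁.add hg₂, ?_⟩
  filter_upwards [he₁, he₂] with z h1 h2
  rw [h1, h2]; ring

lemma sum {ι : Type*} (s : Finset ι) (f : ι → ℂ → ℂ) {x : ℂ} {m : ℤ}
    (h : ∀ i ∈ s, HasRep (f i) x m) :
    HasRep (fun z => ∑ i ∈ s, f i z) x m := by
  classical
  induction s using Finset.induction_on with
  | empty =>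
      have := const (0:ℂ) x
      refine ⟨fun _ => 0, analyticAt_const, ?_⟩
      filter_upwards with z; simp
  | insert _ _ hni ih =>
      rename_i a s
      have := (h a (Finset.mem_insert_self a s)).add
        (ih fun i hi => h i (Finset.mem_insert_of_mem hi))
      simpa [Finset.sum_insert hni] using this

lemma prod {ι : Type*} (s : Finset ι) (f : ι → ℂ → ℂ) {x : ℂ} (m : ι → ℤ)
    (h : ∀ i ∈ s, HasRep (f i) x (m i)) :
    HasRep (fun z => ∏ i ∈ s, f i z) x (∑ i ∈ s, m i) := by
  classical
  induction s using Finset.induction_on with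
  | empty => simpa using const 1 x
  | insert _ _ hni ih =>
      rename_i a s
      have := (h a (Finset.mem_insert_self a s)).mul
        (ih fun i hi => h i (Finset.mem_insert_of_mem hi))
      simpa [Finset.prod_insert hni, Finset.sum_insert hni] using this

/-- Division by a function with an exact representation (nonvanishing unit part). -/
lemma div {f g : ℂ → ℂ} {x : ℂ} {m n : ℤ} (hf : HasRep f x m)
    (hg : ∃ G : ℂ → ℂ, AnalyticAt ℂ G x ∧ G x ≠ 0 ∧
      ∀ᶠ z in nhdsWithin x {x}ᶜ, g z = (z - x) ^ n * G z) :
    HasRep (fun z => f z / g z) x (m - n) := by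
  obtain ⟨F, hF, heF⟩ := hf
  obtain ⟨G, hG, hG0, heG⟩ := hg
  refine ⟨fun z => F z / G z, hF.div hG hG0, ?_⟩
  have hGne : ∀ᶠ z in nhdsWithin x {x}ᶜ, G z ≠ 0 :=
    ((hG.continuousAt.eventually_ne hG0).filter_mono nhdsWithin_le_nhds)
  filter_upwards [heF, heG, hGne, self_mem_nhdsWithin] with z h1 h2 h3 hz'
  have hzx : z - x ≠ 0 := sub_ne_zero.2 hz'
  rw [h1, h2, zpow_sub₀ hzx]
  field_simp [zpow_ne_zero _ hzx]

end HasRep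

namespace HasRep

lemma of_eventually_zero {f : ℂ → ℂ} {x : ℂ} (h : ∀ᶠ z in nhdsWithin x {x}ᶜ, f z = 0)
    (m : ℤ) : HasRep f x m := by
  refine ⟨fun _ => 0, analyticAt_const, ?_⟩
  filter_upwards [h] with z hz
  simp [hz]

lemma le_order {f : ℂ → ℂ} {x : ℂ} {m : ℤ} (h : HasRep f x m) (hf : MeromorphicAt f x) :
    (m : WithTop ℤ) ≤ meromorphicOrderAt f x := by
  obtain ⟨g, hg, he⟩ := h
  by_cases htop : analyticOrderAt g x = ⊤
  · have hg0 : ∀ᶠ z in nhds x, g z = 0 := analyticOrderAt_eq_top.1 htop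
    have : ∀ᶠ z in nhdsWithin x {x}ᶜ, f z = 0 := by
      filter_upwards [he, hg0.filter_mono nhdsWithin_le_nhds] with z h1 h2
      simp [h1, h2]
    rw [meromorphicOrderAt_eq_top_iff.2 this]
    exact le_top
  · obtain ⟨n, hn⟩ := ENat.ne_top_iff_exists.mp htop
    obtain ⟨G, hG, hG0, heG⟩ := (hg.analyticOrderAt_eq_natCast).1 hn.symm
    have : meromorphicOrderAt f x = (m + n : ℤ) := by
      refine (meromorphicOrderAt_eq_int_iff hf).2 ⟨G, hG, hG0, ?_⟩
      filter_upwards [he, heG.filter_mono nhdsWithin_le_nhds, self_mem_nhdsWithin]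
        with z h1 h2 hz'
      have hzx : z - x ≠ 0 := sub_ne_zero.2 hz'
      rw [h1, h2, smul_eq_mul, smul_eq_mul, zpow_add₀ hzx, ← zpow_natCast ((z:ℂ) - x)]
      ring
    rw [this]
    exact_mod_cast le_add_of_nonneg_right (by positivity)

lemma of_le_order {f : ℂ → ℂ} {x : ℂ} {m : ℤ} (hf : MeromorphicAt f x)
    (h : (m : WithTop ℤ) ≤ meromorphicOrderAt f x) : HasRep f x m := by
  by_cases htop : meromorphicOrderAt f x = ⊤
  · exact of_eventually_zero (meromorphicOrderAt_eq_top_iff.1 htop) m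
  · obtain ⟨n, hn⟩ := Option.ne_none_iff_exists'.mp htop
    obtain ⟨G, hG, hG0, heG⟩ := (meromorphicOrderAt_eq_int_iff hf).1 hn
    have hmn : m ≤ n := by
      rw [hn] at h
      exact WithTop.coe_le_coe.1 h
    refine HasRep.mono ⟨G, hG, ?_⟩ hmn
    filter_upwards [heG] with z hz
    simpa [smul_eq_mul] using hz

/-- Exact representation from a finite order. -/
lemma exact_of_order_eq {f : ℂ → ℂ} {x : ℂ} {n : ℤ} (hf : MeromorphicAt f x)
    (h : meromorphicOrderAt f x = (n : WithTop ℤ)) :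
    ∃ G : ℂ → ℂ, AnalyticAt ℂ G x ∧ G x ≠ 0 ∧
      ∀ᶠ z in nhdsWithin x {x}ᶜ, f z = (z - x) ^ n * G z := by
  obtain ⟨G, hG, hG0, heG⟩ := (meromorphicOrderAt_eq_int_iff hf).1 h
  exact ⟨G, hG, hG0, by filter_upwards [heG] with z hz; simpa [smul_eq_mul] using hz⟩

end HasRep

namespace HasRep

/-- From an eventual (punctured) equality of functions, derive a punctured neighborhood
on which both the equality holds and `g` is analytic. -/
lemma exists_open_rep {f g : ℂ → ℂ} {x : ℂ} {m : ℤ} (hg : AnalyticAt ℂ g x)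
    (he : ∀ᶠ z in nhdsWithin x {x}ᶜ, f z = (z - x) ^ m * g z) :
    ∃ U : Set ℂ, IsOpen U ∧ x ∈ U ∧ AnalyticOnNhd ℂ g U ∧
      ∀ z ∈ U, z ≠ x → f z = (z - x) ^ m * g z := by
  obtain ⟨s, hs, hsan⟩ := hg.exists_mem_nhds_analyticOnNhd
  obtain ⟨V, hVs, hVopen, hxV⟩ := mem_nhds_iff.1 hs
  obtain ⟨t, htopen, hxt, hts⟩ := mem_nhdsWithin.1 he
  refine ⟨V ∩ t, hVopen.inter htopen, ⟨hxV, hxt⟩, hsan.mono (fun z hz => hVs hz.1), ?_⟩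
  intro z hz hzx
  exact hts ⟨hz.2, hzx⟩

lemma deriv {f : ℂ → ℂ} {x : ℂ} {m : ℤ} (h : HasRep f x m) :
    HasRep (_root_.deriv f) x (m - 1) := by
  obtain ⟨g, hg, he⟩ := h
  obtain ⟨U, hUopen, hxU, hgan, heq⟩ := exists_open_rep hg he
  have hderivan : AnalyticAt ℂ (_root_.deriv g) x := hgan.deriv x hxU
  refine ⟨fun z => (m : ℂ) * g z + (z - x) * _root_.deriv g z,
    (analyticAt_const.mul hg).add ((analyticAt_id.sub analyticAt_const).mul hderivan), ?_⟩
  have hmem : U ∩ {x}ᶜ ∈ nhdsWithin x {x}ᶜ :=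
    inter_mem (nhdsWithin_le_nhds (hUopen.mem_nhds hxU)) self_mem_nhdsWithin
  filter_upwards [eventually_mem_set.2 hmem] with w hw
  obtain ⟨hwU, hwx'⟩ := hw
  have hwx : w ≠ x := hwx'
  have hsub : w - x ≠ 0 := sub_ne_zero.2 hwx
  -- deriv f w = deriv (fun z => (z-x)^m * g z) w
  have hev : f =ᶠ[nhds w] fun z => (z - x) ^ m * g z := by
    have : U ∩ {x}ᶜ ∈ nhds w := (hUopen.inter (isOpen_compl_singleton)).mem_nhds ⟨hwU, hwx⟩
    filter_upwards [this] with z hz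
    exact heq z hz.1 hz.2
  rw [hev.deriv_eq]
  -- compute the derivative of the explicit function at w
  have h1 : HasDerivAt (fun z : ℂ => (z - x) ^ m) ((m : ℂ) * (w - x) ^ (m - 1)) w := by
    have := (hasDerivAt_zpow m (w - x) (Or.inl hsub))
    have h2 := this.comp w ((hasDerivAt_id w).sub_const x)
    rw [mul_one] at h2
    exact h2
  have h2 : HasDerivAt g (_root_.deriv g w) w :=
    ((hgan w hwU).differentiableAt).hasDerivAt
  have h3 := (h1.mul h2)
  rw [show (fun z => (z - x) ^ m * g z) = ((fun z => (z - x) ^ m) * g) from rfl, h3.deriv]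
  have : (w - x) ^ m = (w - x) ^ (m - 1) * (w - x) := by
    rw [← zpow_add_one₀ hsub, sub_add_cancel]
  rw [this]
  ring

lemma deriv_zero {f : ℂ → ℂ} {x : ℂ} (h : HasRep f x 0) :
    HasRep (_root_.deriv f) x 0 := by
  obtain ⟨g, hg, he⟩ := h
  obtain ⟨U, hUopen, hxU, hgan, heq⟩ := exists_open_rep hg he
  refine ⟨_root_.deriv g, hgan.deriv x hxU, ?_⟩
  have hmem : U ∩ {x}ᶜ ∈ nhdsWithin x {x}ᶜ :=
    inter_mem (nhdsWithin_le_nhds (hUopen.mem_nhds hxU)) self_mem_nhdsWithin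
  filter_upwards [eventually_mem_set.2 hmem] with w hw
  obtain ⟨hwU, hwx'⟩ := hw
  have hwx : w ≠ x := hwx'
  have hev : f =ᶠ[nhds w] g := by
    have : U ∩ {x}ᶜ ∈ nhds w := (hUopen.inter (isOpen_compl_singleton)).mem_nhds ⟨hwU, hwx⟩
    filter_upwards [this] with z hz
    simpa using heq z hz.1 hz.2
  rw [hev.deriv_eq]
  simp

lemma iteratedDeriv {f : ℂ → ℂ} {x : ℂ} {m : ℤ} (h : HasRep f x m) (i : ℕ) :
    HasRep (_root_.iteratedDeriv i f) x (m - i) := by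
  induction i with
  | zero => simpa using h
  | succ n ih =>
      rw [_root_.iteratedDeriv_succ]
      have := ih.deriv
      have he : (m - ((n : ℤ) + 1)) = m - (n:ℤ) - 1 := by ring
      rw [show ((n+1 : ℕ) : ℤ) = (n:ℤ)+1 by push_cast; ring, he]
      exact this

lemma iteratedDeriv_zero {f : ℂ → ℂ} {x : ℂ} (h : HasRep f x 0) (i : ℕ) :
    HasRep (_root_.iteratedDeriv i f) x 0 := by
  induction i with
  | zero => simpa using h
  | succ n ih => rw [_root_.iteratedDeriv_succ]; exact ih.deriv_zero

end HasRep



-- ===== multiplicity bridges =====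

lemma poleMult_eq_of_mero {g : ℂ → ℂ} {z : ℂ} (h : MeromorphicAt g z) :
    poleMult g z = (-((meromorphicOrderAt g z).untopD 0)).toNat := by
  rw [poleMult, dif_pos h]

lemma zeroMult_eq_of_mero {g : ℂ → ℂ} {z : ℂ} (h : MeromorphicAt g z) :
    zeroMult g z = ((meromorphicOrderAt g z).untopD 0).toNat := by
  rw [zeroMult, dif_pos h]

lemma poleMult_le_of_hasRep {g : ℂ → ℂ} {z : ℂ} {m : ℤ} (hrep : HasRep g z m)
    {t : ℕ} (ht : -(t : ℤ) ≤ m) : poleMult g z ≤ t := by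
  have hm := hrep.meromorphicAt
  rw [poleMult_eq_of_mero hm]
  have hord : (m : WithTop ℤ) ≤ meromorphicOrderAt g z := hrep.le_order hm
  rcases eq_or_ne (meromorphicOrderAt g z) ⊤ with ho | ho
  · rw [ho]; simp
  · obtain ⟨n, hn⟩ := WithTop.ne_top_iff_exists.1 ho
    rw [← hn] at hord ⊢
    have hmn : m ≤ n := WithTop.coe_le_coe.1 hord
    simp only [WithTop.untopD_coe]
    omega

lemma hasRep_neg_poleMult {g : ℂ → ℂ} {z : ℂ} (h : MeromorphicAt g z) :
    HasRep g z (-(poleMult g z : ℤ)) := by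
  apply HasRep.of_le_order h
  rw [poleMult_eq_of_mero h]
  rcases eq_or_ne (meromorphicOrderAt g z) ⊤ with ho | ho
  · rw [ho]; exact le_top
  · obtain ⟨n, hn⟩ := WithTop.ne_top_iff_exists.1 ho
    rw [← hn]
    simp only [WithTop.untopD_coe]
    have : -(((-n).toNat : ℤ)) ≤ n := by omega
    exact_mod_cast this

lemma zeroMult_eq_toNat {f : ℂ → ℂ} {z : ℂ} (h : MeromorphicAt f z) {q : ℤ}
    (hq : meromorphicOrderAt f z = (q : WithTop ℤ)) : zeroMult f z = q.toNat := by
  rw [zeroMult_eq_of_mero h, hq, WithTop.untopD_coe]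

lemma poleMult_eq_toNat {f : ℂ → ℂ} {z : ℂ} (h : MeromorphicAt f z) {q : ℤ}
    (hq : meromorphicOrderAt f z = (q : WithTop ℤ)) : poleMult f z = (-q).toNat := by
  rw [poleMult_eq_of_mero h, hq, WithTop.untopD_coe]

lemma monoDeg_le_monoWt {k : ℕ} (n : Fin (k + 1) → ℕ) : monoDeg n ≤ monoWt n :=
  Finset.sum_le_sum fun i _ => Nat.le_mul_of_pos_left _ (Nat.succ_pos _)

-- ===== the pointwise multiplicity bound =====

lemma pointwise_bound
    (f : ℂ → ℂ) (hf0 : MeromorphicOn f Set.univ)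
    {t k : ℕ} (b : Fin t → ℂ → ℂ) (M : Fin t → Fin (k + 1) → ℕ)
    (hbmero : ∀ j, MeromorphicOn (b j) Set.univ)
    (dbar dlow Γ μ : ℕ)
    (hdbar : ∀ j, monoDeg (M j) ≤ dbar)
    (hdlow : ∀ j, dlow ≤ monoDeg (M j))
    (hΓ : ∀ j, monoWt (M j) ≤ Γ)
    (hμ : ∀ j, monoWt (M j) - monoDeg (M j) ≤ μ)
    (hdbar1 : 1 ≤ dbar) (hld : dlow ≤ dbar) (hΓd : dbar ≤ Γ)
    (z : ℂ) :
    poleMult (fun w => diffPoly b M f w / f w ^ dbar) z ≤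
      (Γ - dbar) * min 1 (poleMult f z)
      + (dbar - dlow) * (if k + 1 ≤ zeroMult f z then zeroMult f z else 0)
      + μ * (if k + 1 ≤ zeroMult f z then 1 else 0)
      + dbar * (if zeroMult f z ≤ k then zeroMult f z else 0)
      + ∑ j, poleMult (b j) z := by
  classical
  have hfz : MeromorphicAt f z := hf0 z trivial
  set PB : ℕ := ∑ j, poleMult (b j) z with hPB
  have hπPB : ∀ j, poleMult (b j) z ≤ PB := by
    intro j
    rw [hPB]
    exact Finset.single_le_sum (f := fun j => poleMult (b j) z)
      (fun i _ => Nat.zero_le _) (Finset.mem_univ j)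
  have hbrep : ∀ j, HasRep (b j) z (-(poleMult (b j) z : ℤ)) :=
    fun j => hasRep_neg_poleMult (hbmero j z trivial)
  rcases eq_or_ne (meromorphicOrderAt f z) ⊤ with ho | hne
  · -- f vanishes identically near z
    have hf00 : ∀ᶠ w in nhdsWithin z {z}ᶜ, f w = 0 := meromorphicOrderAt_eq_top_iff.1 ho
    have hg0 : ∀ᶠ w in nhdsWithin z {z}ᶜ, diffPoly b M f w / f w ^ dbar = 0 := by
      filter_upwards [hf00] with w hw
      rw [hw, zero_pow (by omega), div_zero]
    have := poleMult_le_of_hasRep (HasRep.of_eventually_zero hg0 0) (t := 0) (by simp)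
    omega
  · -- f has finite order q at z
    obtain ⟨q, hq⟩ := WithTop.ne_top_iff_exists.1 hne
    have ho : meromorphicOrderAt f z = (q : WithTop ℤ) := hq.symm
    have hRf : HasRep f z q := HasRep.of_le_order hfz (le_of_eq ho.symm)
    obtain ⟨F, hF, hF0, heF⟩ := HasRep.exact_of_order_eq hfz ho
    -- exact representation of f ^ dbar
    have hpow : ∃ G : ℂ → ℂ, AnalyticAt ℂ G z ∧ G z ≠ 0 ∧
        ∀ᶠ w in nhdsWithin z {z}ᶜ, f w ^ dbar = (w - z) ^ ((dbar : ℤ) * q) * G w := by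
      refine ⟨fun w => F w ^ dbar, hF.pow dbar, pow_ne_zero _ hF0, ?_⟩
      filter_upwards [heF] with w hw
      rw [hw, mul_pow, ← zpow_natCast ((w - z) ^ q), ← zpow_mul]
      ring_nf
    have hzM : zeroMult f z = q.toNat := zeroMult_eq_toNat hfz ho
    have hpM : poleMult f z = (-q).toNat := poleMult_eq_toNat hfz ho
    -- the sum identity for monomial exponents
    have hSj : ∀ j, (∑ i : Fin (k + 1), ((M j i : ℤ) * (q - (i : ℕ)))) =
        (monoDeg (M j) : ℤ) * q - ((monoWt (M j) : ℤ) - (monoDeg (M j) : ℤ)) := by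
      intro j
      have h1 : (monoWt (M j) : ℤ) = ∑ i : Fin (k + 1), (((i : ℕ) : ℤ) + 1) * (M j i) := by
        rw [monoWt]; push_cast
        exact Finset.sum_congr rfl fun i _ => by ring
      have h2 : (monoDeg (M j) : ℤ) = ∑ i : Fin (k + 1), ((M j i : ℤ)) := by
        rw [monoDeg]; push_cast; rfl
      calc (∑ i : Fin (k + 1), ((M j i : ℤ) * (q - (i : ℕ))))
          = (∑ i : Fin (k + 1), ((M j i : ℤ) * q)) -
              (∑ i : Fin (k + 1), (((i : ℕ) : ℤ) + 1) * (M j i)) +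
              ∑ i : Fin (k + 1), ((M j i : ℤ)) := by
            rw [← Finset.sum_sub_distrib, ← Finset.sum_add_distrib]
            exact Finset.sum_congr rfl fun i _ => by ring
        _ = (monoDeg (M j) : ℤ) * q - ((monoWt (M j) : ℤ) - (monoDeg (M j) : ℤ)) := by
            rw [← h1, ← h2, ← Finset.sum_mul, ← h2]
            ring
    -- monomial representations (pole / high-order-zero case)
    have hMrep : ∀ j, HasRep (fun w => diffMono (M j) f w) z
        ((monoDeg (M j) : ℤ) * q - ((monoWt (M j) : ℤ) - (monoDeg (M j) : ℤ))) := by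
      intro j
      rw [← hSj j]
      have := HasRep.prod Finset.univ
        (fun (i : Fin (k + 1)) (w : ℂ) => (iteratedDeriv (i : ℕ) f w) ^ (M j i))
        (fun i : Fin (k + 1) => (M j i : ℤ) * (q - ((i : ℕ) : ℤ)))
        (fun i _ => (hRf.iteratedDeriv (i : ℕ)).pow (M j i))
      simpa [diffMono] using this
    -- the per-term representation
    have hterm : ∀ j, HasRep (fun w => b j w * diffMono (M j) f w) z
        (-(poleMult (b j) z : ℤ) +
          ((monoDeg (M j) : ℤ) * q - ((monoWt (M j) : ℤ) - (monoDeg (M j) : ℤ)))) :=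
      fun j => (hbrep j).mul (hMrep j)
    by_cases hq0 : q < 0
    · -- pole of f at z
      have hmin : min 1 (poleMult f z) = 1 := by
        rw [hpM]; omega
      set m₀ : ℤ := -(PB : ℤ) + (dbar : ℤ) * q - ((Γ : ℤ) - (dbar : ℤ)) with hm₀
      have hP : HasRep (fun w => diffPoly b M f w) z m₀ := by
        have : HasRep (fun w => ∑ j, b j w * diffMono (M j) f w) z m₀ := by
          apply HasRep.sum
          intro j _
          apply (hterm j).mono
          have hdj : (monoDeg (M j) : ℤ) ≤ dbar := by exact_mod_cast hdbar j
          have hΓj : (monoWt (M j) : ℤ) ≤ Γ := by exact_mod_cast hΓ j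
          have hwd : (monoDeg (M j) : ℤ) ≤ monoWt (M j) := by
            exact_mod_cast monoDeg_le_monoWt (M j)
          have hπ : (poleMult (b j) z : ℤ) ≤ PB := by exact_mod_cast hπPB j
          have hkey : ((dbar : ℤ) - monoDeg (M j)) * q ≤ -((dbar : ℤ) - monoDeg (M j)) := by
            have h1 : (0 : ℤ) ≤ (dbar : ℤ) - monoDeg (M j) := by omega
            have := mul_le_mul_of_nonneg_left (show q ≤ -1 by omega) h1
            simpa using this
          nlinarith [hkey]
        simpa [diffPoly] using this
      have hg : HasRep (fun w => diffPoly b M f w / f w ^ dbar) z (m₀ - (dbar : ℤ) * q) :=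
        hP.div hpow
      have := poleMult_le_of_hasRep hg (t := (Γ - dbar) * 1 + PB)
        (by
          have hc : ((Γ - dbar : ℕ) : ℤ) = (Γ : ℤ) - dbar := by omega
          simp only [hm₀]
          push_cast [hc]
          linarith)
      rw [hmin]
      have hif1 : (if k + 1 ≤ zeroMult f z then zeroMult f z else 0) = 0 := by
        rw [hzM, if_neg (by omega)]
      have hif2 : (if k + 1 ≤ zeroMult f z then 1 else 0) = 0 := by
        rw [hzM, if_neg (by omega)]
      have hif3 : (if zeroMult f z ≤ k then zeroMult f z else 0) = 0 := by
        rw [hzM, if_pos (by omega)]; omega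
      rw [hif1, hif2, hif3]
      omega
    · push_neg at hq0
      have hmin : min 1 (poleMult f z) = 0 := by rw [hpM]; omega
      by_cases hqk : q.toNat ≤ k
      · -- small zero (or ordinary point) of f
        have hD0 : ∀ i : Fin (k + 1), HasRep (iteratedDeriv i f) z 0 :=
          fun i => (hRf.mono hq0).iteratedDeriv_zero i
        have hMrep0 : ∀ j, HasRep (fun w => diffMono (M j) f w) z 0 := by
          intro j
          have := HasRep.prod Finset.univ
            (fun (i : Fin (k + 1)) (w : ℂ) => (iteratedDeriv (i : ℕ) f w) ^ (M j i))
            (fun _ : Fin (k + 1) => (0 : ℤ))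
            (fun i _ => by simpa using (hD0 i).pow (M j i))
          simpa [diffMono] using this
        have hP : HasRep (fun w => diffPoly b M f w) z (-(PB : ℤ)) := by
          have : HasRep (fun w => ∑ j, b j w * diffMono (M j) f w) z (-(PB : ℤ)) := by
            apply HasRep.sum
            intro j _
            apply ((hbrep j).mul (hMrep0 j)).mono
            have hπ : (poleMult (b j) z : ℤ) ≤ PB := by exact_mod_cast hπPB j
            omega
          simpa [diffPoly] using this
        have hg : HasRep (fun w => diffPoly b M f w / f w ^ dbar) z
            (-(PB : ℤ) - (dbar : ℤ) * q) := hP.div hpow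
        have := poleMult_le_of_hasRep hg (t := dbar * q.toNat + PB)
          (by
            have hqt : ((q.toNat : ℤ)) = q := Int.toNat_of_nonneg hq0
            push_cast [hqt]
            linarith)
        have hif1 : (if k + 1 ≤ zeroMult f z then zeroMult f z else 0) = 0 := by
          rw [hzM, if_neg (by omega)]
        have hif2 : (if k + 1 ≤ zeroMult f z then 1 else 0) = 0 := by
          rw [hzM, if_neg (by omega)]
        have hif3 : (if zeroMult f z ≤ k then zeroMult f z else 0) = q.toNat := by
          rw [hzM, if_pos (by omega)]
        rw [hmin, hif1, hif2, hif3]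
        omega
      · -- high-order zero of f
        set m₀ : ℤ := -(PB : ℤ) + (dlow : ℤ) * q - (μ : ℤ) with hm₀
        have hP : HasRep (fun w => diffPoly b M f w) z m₀ := by
          have : HasRep (fun w => ∑ j, b j w * diffMono (M j) f w) z m₀ := by
            apply HasRep.sum
            intro j _
            apply (hterm j).mono
            have hdj : (dlow : ℤ) ≤ monoDeg (M j) := by exact_mod_cast hdlow j
            have hwd : (monoDeg (M j) : ℤ) ≤ monoWt (M j) := by
              exact_mod_cast monoDeg_le_monoWt (M j)
            have hμj : (monoWt (M j) : ℤ) - (monoDeg (M j) : ℤ) ≤ μ := by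
              have := hμ j
              omega
            have hπ : (poleMult (b j) z : ℤ) ≤ PB := by exact_mod_cast hπPB j
            have hkey : (dlow : ℤ) * q ≤ (monoDeg (M j) : ℤ) * q :=
              mul_le_mul_of_nonneg_right hdj hq0
            omega
          simpa [diffPoly] using this
        have hg : HasRep (fun w => diffPoly b M f w / f w ^ dbar) z
            (m₀ - (dbar : ℤ) * q) := hP.div hpow
        have := poleMult_le_of_hasRep hg
          (t := (dbar - dlow) * q.toNat + μ * 1 + PB)
          (by
            have h1 : ((dbar - dlow : ℕ) : ℤ) = (dbar : ℤ) - dlow := by omega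
            have hqt : ((q.toNat : ℤ)) = q := Int.toNat_of_nonneg hq0
            simp only [hm₀]
            push_cast [h1, hqt]
            linarith)
        have hif1 : (if k + 1 ≤ zeroMult f z then zeroMult f z else 0) = q.toNat := by
          rw [hzM, if_pos (by omega)]
        have hif2 : (if k + 1 ≤ zeroMult f z then 1 else 0) = 1 := by
          rw [hzM, if_pos (by omega)]
        have hif3 : (if zeroMult f z ≤ k then zeroMult f z else 0) = 0 := by
          rw [hzM, if_neg (by omega)]
        rw [hmin, hif1, hif2, hif3]
        omega



-- ===== counting function machinery =====

/-- A multiplicity function with finite support in every closed ball. -/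
def LocFin (ν : ℂ → ℕ) : Prop :=
  ∀ R : ℝ, {z : ℂ | z ∈ Metric.closedBall (0 : ℂ) R ∧ ν z ≠ 0}.Finite

namespace LocFin

lemma of_le {ν ν' : ℂ → ℕ} (h : LocFin ν') (hle : ∀ z, ν z ≤ ν' z) : LocFin ν := by
  intro R
  apply (h R).subset
  rintro z ⟨hz1, hz2⟩
  exact ⟨hz1, fun h0 => hz2 (by have := hle z; omega)⟩

lemma add {ν ν' : ℂ → ℕ} (h : LocFin ν) (h' : LocFin ν') :
    LocFin (fun z => ν z + ν' z) := by
  intro R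
  apply ((h R).union (h' R)).subset
  rintro z ⟨hz1, hz2⟩
  have hz2' : ν z + ν' z ≠ 0 := hz2
  by_cases hν : ν z = 0
  · exact Or.inr ⟨hz1, by omega⟩
  · exact Or.inl ⟨hz1, hν⟩

lemma mul (c : ℕ) {ν : ℂ → ℕ} (h : LocFin ν) : LocFin (fun z => c * ν z) := by
  intro R
  apply (h R).subset
  rintro z ⟨hz1, hz2⟩
  have hz2' : c * ν z ≠ 0 := hz2
  exact ⟨hz1, fun h0 => hz2' (by rw [h0, mul_zero])⟩

lemma zero : LocFin (fun _ => 0) := by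
  intro R
  convert Set.finite_empty
  ext z
  simp

lemma sum {ι : Type*} (s : Finset ι) (ν : ι → ℂ → ℕ) (h : ∀ i, LocFin (ν i)) :
    LocFin (fun z => ∑ i ∈ s, ν i z) := by
  classical
  induction s using Finset.induction_on with
  | empty => simpa using zero
  | insert _ _ hni ih =>
      rename_i a s
      have := (h a).add ih
      apply LocFin.of_le this
      intro z
      rw [Finset.sum_insert hni]

end LocFin

lemma nCount_eq_sum {ν : ℂ → ℕ} (hν : LocFin ν) {t : ℝ} (T : Finset ℂ)
    (hT1 : ∀ z ∈ T, z ∈ Metric.closedBall (0 : ℂ) t)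
    (hT2 : ∀ z, z ∈ Metric.closedBall (0 : ℂ) t → ν z ≠ 0 → z ∈ T) :
    nCount ν t = ∑ z ∈ T, (ν z : ℝ) := by
  classical
  have hfin : (Metric.closedBall (0 : ℂ) t ∩
      Function.support (fun z => (ν z : ℝ))).Finite := by
    apply (hν t).subset
    rintro z ⟨hz1, hz2⟩
    refine ⟨hz1, ?_⟩
    simp only [Function.mem_support, ne_eq, Nat.cast_eq_zero] at hz2
    exact hz2
  rw [nCount, finsum_mem_eq_sum _ hfin]
  apply Finset.sum_subset
  · intro z hz
    rw [Set.Finite.mem_toFinset] at hz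
    obtain ⟨hz1, hz2⟩ := hz
    simp only [Function.mem_support, ne_eq, Nat.cast_eq_zero] at hz2
    exact hT2 z hz1 hz2
  · intro z hz hz'
    rw [Set.Finite.mem_toFinset] at hz'
    simp only [Set.mem_inter_iff, Function.mem_support, ne_eq, not_and, not_not] at hz'
    by_cases hzball : z ∈ Metric.closedBall (0 : ℂ) t
    · exact hz' hzball
    · exact absurd (hT1 z hz) hzball

/-- canonical finset of support points in the closed ball of radius `t` -/
def suppFinset {ν : ℂ → ℕ} (hν : LocFin ν) (t : ℝ) : Finset ℂ := (hν t).toFinset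

lemma mem_suppFinset {ν : ℂ → ℕ} (hν : LocFin ν) {t : ℝ} {z : ℂ} :
    z ∈ suppFinset hν t ↔ z ∈ Metric.closedBall (0 : ℂ) t ∧ ν z ≠ 0 := by
  rw [suppFinset, Set.Finite.mem_toFinset]; rfl

lemma nCount_eq_suppFinset {ν : ℂ → ℕ} (hν : LocFin ν) (t : ℝ) :
    nCount ν t = ∑ z ∈ suppFinset hν t, (ν z : ℝ) :=
  nCount_eq_sum hν _ (fun z hz => ((mem_suppFinset hν).1 hz).1)
    (fun z h1 h2 => (mem_suppFinset hν).2 ⟨h1, h2⟩)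

lemma nCount_mono_t {ν : ℂ → ℕ} (hν : LocFin ν) {t t' : ℝ} (h : t ≤ t') :
    nCount ν t ≤ nCount ν t' := by
  rw [nCount_eq_suppFinset hν t, nCount_eq_suppFinset hν t']
  apply Finset.sum_le_sum_of_subset_of_nonneg
  · intro z hz
    rw [mem_suppFinset] at hz ⊢
    exact ⟨Metric.closedBall_subset_closedBall h hz.1, hz.2⟩
  · intro z _ _
    positivity

lemma nCount_mono_nu {ν ν' : ℂ → ℕ} (hν : LocFin ν) (hν' : LocFin ν')
    (hle : ∀ z, ν z ≤ ν' z) (t : ℝ) : nCount ν t ≤ nCount ν' t := by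
  rw [nCount_eq_sum hν (suppFinset hν' t)
      (fun z hz => ((mem_suppFinset hν').1 hz).1)
      (fun z h1 h2 => (mem_suppFinset hν').2 ⟨h1, fun h0 => h2 (by have := hle z; omega)⟩),
    nCount_eq_suppFinset hν' t]
  apply Finset.sum_le_sum
  intro z _
  exact_mod_cast hle z

lemma nCount_add {ν ν' : ℂ → ℕ} (hν : LocFin ν) (hν' : LocFin ν') (t : ℝ) :
    nCount (fun z => ν z + ν' z) t = nCount ν t + nCount ν' t := by
  classical
  set T := suppFinset hν t ∪ suppFinset hν' t with hT
  have hT1 : ∀ z ∈ T, z ∈ Metric.closedBall (0 : ℂ) t := by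
    intro z hz
    rcases Finset.mem_union.1 hz with h | h
    · exact ((mem_suppFinset hν).1 h).1
    · exact ((mem_suppFinset hν').1 h).1
  have e1 : nCount (fun z => ν z + ν' z) t = ∑ z ∈ T, ((ν z + ν' z : ℕ) : ℝ) := by
    apply nCount_eq_sum (hν.add hν') T hT1
    intro z h1 h2
    rcases Nat.eq_zero_or_pos (ν z) with h | h
    · exact Finset.mem_union_right _ ((mem_suppFinset hν').2 ⟨h1, by omega⟩)
    · exact Finset.mem_union_left _ ((mem_suppFinset hν).2 ⟨h1, by omega⟩)
  have e2 : nCount ν t = ∑ z ∈ T, (ν z : ℝ) :=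
    nCount_eq_sum hν T hT1 (fun z h1 h2 =>
      Finset.mem_union_left _ ((mem_suppFinset hν).2 ⟨h1, h2⟩))
  have e3 : nCount ν' t = ∑ z ∈ T, (ν' z : ℝ) :=
    nCount_eq_sum hν' T hT1 (fun z h1 h2 =>
      Finset.mem_union_right _ ((mem_suppFinset hν').2 ⟨h1, h2⟩))
  rw [e1, e2, e3, ← Finset.sum_add_distrib]
  push_cast
  rfl

lemma nCount_zero_fun (t : ℝ) : nCount (fun _ => 0) t = 0 := by
  rw [nCount_eq_suppFinset LocFin.zero t]
  apply Finset.sum_eq_zero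
  intro z _
  simp

lemma nCount_nonneg {ν : ℂ → ℕ} (hν : LocFin ν) (t : ℝ) : 0 ≤ nCount ν t := by
  rw [nCount_eq_suppFinset hν t]
  positivity

/-- On a small punctured interval at `0`, `nCount` is constant equal to `ν 0`. -/
lemma exists_small_radius {ν : ℂ → ℕ} (hν : LocFin ν) {r : ℝ} (hr : 0 < r) :
    ∃ ε : ℝ, 0 < ε ∧ ε ≤ r ∧ ∀ t, 0 ≤ t → t < ε → nCount ν t = ν 0 := by
  classical
  set S := (suppFinset hν r).erase 0 with hS
  have key : ∀ ε : ℝ, 0 < ε → ε ≤ r → (∀ z ∈ S, ε ≤ ‖z‖) →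
      ∀ t, 0 ≤ t → t < ε → nCount ν t = ν 0 := by
    intro ε hε hεr hεS t ht htε
    have hsub : ∀ z, z ∈ Metric.closedBall (0 : ℂ) t → ν z ≠ 0 → z ∈ ({0} : Finset ℂ) := by
      intro z hz hz0
      rw [Finset.mem_singleton]
      by_contra hzz
      have hzS : z ∈ S := by
        rw [hS, Finset.mem_erase]
        refine ⟨hzz, (mem_suppFinset hν).2 ⟨?_, hz0⟩⟩
        rw [Metric.mem_closedBall] at hz ⊢
        calc dist z 0 ≤ t := hz
          _ ≤ r := le_trans (le_of_lt htε) hεr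
      have h1 := hεS z hzS
      rw [Metric.mem_closedBall, dist_zero_right] at hz
      linarith
    by_cases h0 : ν 0 = 0
    · rw [nCount_eq_sum hν (∅ : Finset ℂ) (by simp)
        (fun z h1 h2 => by
          have := hsub z h1 h2
          rw [Finset.mem_singleton] at this
          exact absurd (this ▸ h2) (by simpa using h0))]
      simp [h0]
    · rw [nCount_eq_sum hν ({0} : Finset ℂ)
        (by intro z hz; rw [Finset.mem_singleton] at hz; simpa [hz] using ht) hsub]
      simp
  by_cases hSne : S.Nonempty
  · set m := (S.image (fun z => ‖z‖)).min' (hSne.image _) with hm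
    have hmpos : 0 < m := by
      rw [hm]
      apply lt_of_lt_of_le ?_ (le_refl _)
      have := Finset.min'_mem (S.image (fun z => ‖z‖)) (hSne.image _)
      rw [Finset.mem_image] at this
      obtain ⟨z, hzS, hz⟩ := this
      rw [← hz]
      exact norm_pos_iff.2 (Finset.ne_of_mem_erase hzS)
    refine ⟨min r m, lt_min hr hmpos, min_le_left _ _, ?_⟩
    apply key _ (lt_min hr hmpos) (min_le_left _ _)
    intro z hzS
    calc min r m ≤ m := min_le_right _ _
      _ ≤ ‖z‖ := Finset.min'_le _ _ (Finset.mem_image_of_mem _ hzS)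
  · refine ⟨r, hr, le_refl r, ?_⟩
    apply key r hr (le_refl r)
    intro z hzS
    exact absurd ⟨z, hzS⟩ hSne

lemma locFin_intervalIntegrable {ν : ℂ → ℕ} (hν : LocFin ν) {r : ℝ} (hr : 0 ≤ r) :
    IntervalIntegrable (fun t => (nCount ν t - (ν 0 : ℝ)) / t) volume 0 r := by
  rcases eq_or_lt_of_le hr with h | hrpos
  · rw [← h]
  obtain ⟨ε, hε, hεr, hflat⟩ := exists_small_radius hν hrpos
  set c := ε / 2 with hc
  have hc0 : 0 < c := by positivity
  have hcε : c < ε := by rw [hc]; linarith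
  have hcr : c ≤ r := le_trans (le_of_lt hcε) hεr
  have part1 : IntervalIntegrable (fun t => (nCount ν t - (ν 0 : ℝ)) / t) volume 0 c := by
    apply (intervalIntegrable_const (c := (0 : ℝ))).congr_ae
    rw [Filter.EventuallyEq, ae_restrict_iff' measurableSet_uIoc]
    apply Filter.Eventually.of_forall
    intro t ht
    rw [Set.uIoc_of_le (le_of_lt hc0), Set.mem_Ioc] at ht
    rw [hflat t (le_of_lt ht.1) (lt_of_le_of_lt ht.2 hcε)]
    simp
  have part2 : IntervalIntegrable (fun t => (nCount ν t - (ν 0 : ℝ)) / t) volume c r := by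
    have hmono : MonotoneOn (fun t => nCount ν t - (ν 0 : ℝ)) (Set.uIcc c r) := by
      intro x _ y _ hxy
      have := nCount_mono_t hν hxy
      simp only
      linarith
    have h1 : IntervalIntegrable (fun t => nCount ν t - (ν 0 : ℝ)) volume c r :=
      hmono.intervalIntegrable
    have h2 : ContinuousOn (fun t : ℝ => t⁻¹) (Set.uIcc c r) := by
      apply ContinuousOn.inv₀ continuous_id.continuousOn
      intro x hx h0
      rw [Set.uIcc_of_le hcr, Set.mem_Icc] at hx
      simp only [id_eq] at h0
      rw [h0] at hx
      linarith [hx.1]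
    have := h1.mul_continuousOn h2
    simpa [div_eq_mul_inv] using this
  exact part1.trans part2

lemma nCount_sub_le {ν ν' : ℂ → ℕ} (hν : LocFin ν) (hν' : LocFin ν')
    (hle : ∀ z, ν z ≤ ν' z) {t : ℝ} (ht : 0 ≤ t) :
    nCount ν t - (ν 0 : ℝ) ≤ nCount ν' t - (ν' 0 : ℝ) := by
  classical
  set T := (suppFinset hν' t).erase 0 with hT
  have hmem0 : (0 : ℂ) ∈ Metric.closedBall (0 : ℂ) t := by
    rw [Metric.mem_closedBall, dist_self]; exact ht
  have key : ∀ (μ : ℂ → ℕ), LocFin μ → (∀ z, μ z ≤ ν' z) →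
      nCount μ t = (μ 0 : ℝ) + ∑ z ∈ T, (μ z : ℝ) := by
    intro μ hμ hμle
    have : nCount μ t = ∑ z ∈ insert (0 : ℂ) T, (μ z : ℝ) := by
      apply nCount_eq_sum hμ
      · intro z hz
        rcases Finset.mem_insert.1 hz with h | h
        · rw [h]; exact hmem0
        · exact ((mem_suppFinset hν').1 (Finset.mem_of_mem_erase h)).1
      · intro z h1 h2
        rcases eq_or_ne z 0 with h | h
        · exact Finset.mem_insert.2 (Or.inl h)
        · refine Finset.mem_insert.2 (Or.inr ?_)
          rw [hT, Finset.mem_erase]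
          exact ⟨h, (mem_suppFinset hν').2 ⟨h1, fun h0 => h2 (by have := hμle z; omega)⟩⟩
    rw [this, Finset.sum_insert (by simp [hT])]
  rw [key ν hν hle, key ν' hν' (fun z => le_refl _)]
  have : ∑ z ∈ T, (ν z : ℝ) ≤ ∑ z ∈ T, (ν' z : ℝ) := by
    apply Finset.sum_le_sum
    intro z _
    exact_mod_cast hle z
  linarith

lemma NCount_mono {ν ν' : ℂ → ℕ} (hν : LocFin ν) (hν' : LocFin ν')
    (hle : ∀ z, ν z ≤ ν' z) {r : ℝ} (hr : 1 ≤ r) :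
    NCount ν r ≤ NCount ν' r := by
  have hr0 : (0 : ℝ) ≤ r := le_trans zero_le_one hr
  have hlog : 0 ≤ Real.log r := Real.log_nonneg hr
  have h1 : (ν 0 : ℝ) * Real.log r ≤ (ν' 0 : ℝ) * Real.log r := by
    apply mul_le_mul_of_nonneg_right _ hlog
    exact_mod_cast hle 0
  have h2 : (∫ t in (0:ℝ)..r, (nCount ν t - (ν 0 : ℝ)) / t) ≤
      ∫ t in (0:ℝ)..r, (nCount ν' t - (ν' 0 : ℝ)) / t := by
    apply intervalIntegral.integral_mono_on hr0
      (locFin_intervalIntegrable hν hr0) (locFin_intervalIntegrable hν' hr0)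
    intro t ht
    exact div_le_div_of_nonneg_right (nCount_sub_le hν hν' hle ht.1) ht.1
  rw [NCount, NCount]
  exact add_le_add h1 h2

lemma NCount_add {ν ν' : ℂ → ℕ} (hν : LocFin ν) (hν' : LocFin ν') {r : ℝ} (hr : 0 ≤ r) :
    NCount (fun z => ν z + ν' z) r = NCount ν r + NCount ν' r := by
  rw [NCount, NCount, NCount]
  have heq : ∀ t : ℝ, (nCount (fun z => ν z + ν' z) t - ((ν 0 + ν' 0 : ℕ) : ℝ)) / t =
      (nCount ν t - (ν 0 : ℝ)) / t + (nCount ν' t - (ν' 0 : ℝ)) / t := by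
    intro t
    rw [← add_div, nCount_add hν hν']
    push_cast
    ring_nf
  rw [intervalIntegral.integral_congr (g :=
      fun t => (nCount ν t - (ν 0 : ℝ)) / t + (nCount ν' t - (ν' 0 : ℝ)) / t)
      (fun t _ => heq t),
    intervalIntegral.integral_add (locFin_intervalIntegrable hν hr)
      (locFin_intervalIntegrable hν' hr)]
  push_cast
  ring

lemma NCount_zero_fun (r : ℝ) : NCount (fun _ => 0) r = 0 := by
  rw [NCount]
  simp only [Nat.cast_zero, zero_mul, zero_add]
  rw [intervalIntegral.integral_congr (g := fun _ => (0:ℝ))]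
  · simp
  · intro t _
    simp [nCount_zero_fun]

lemma NCount_nsmul (c : ℕ) {ν : ℂ → ℕ} (hν : LocFin ν) {r : ℝ} (hr : 0 ≤ r) :
    NCount (fun z => c * ν z) r = c * NCount ν r := by
  induction c with
  | zero => simpa using NCount_zero_fun r
  | succ n ih =>
      have h1 : NCount (fun z => n * ν z + ν z) r = NCount (fun z => n * ν z) r + NCount ν r :=
        NCount_add (hν.mul n) hν hr
      have h2 : (fun z => (n + 1) * ν z) = (fun z => n * ν z + ν z) := by
        funext z; ring
      rw [h2, h1, ih]
      push_cast
      ring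

lemma NCount_sum {ι : Type*} (s : Finset ι) (ν : ι → ℂ → ℕ) (h : ∀ i, LocFin (ν i))
    {r : ℝ} (hr : 0 ≤ r) :
    NCount (fun z => ∑ i ∈ s, ν i z) r = ∑ i ∈ s, NCount (ν i) r := by
  classical
  induction s using Finset.induction_on with
  | empty => simpa using NCount_zero_fun r
  | insert _ _ hni ih =>
      rename_i a s
      have h1 : (fun z => ∑ i ∈ insert a s, ν i z) =
          (fun z => ν a z + ∑ i ∈ s, ν i z) := by
        funext z
        rw [Finset.sum_insert hni]
      rw [h1, NCount_add (h a) (LocFin.sum s ν h) hr, ih, Finset.sum_insert hni]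



-- ===== local finiteness of the zero/pole set =====

lemma analyticAt_zpow_shift {x w : ℂ} (hw : w ≠ x) (n : ℤ) :
    AnalyticAt ℂ (fun v => (v - x) ^ n) w := by
  rcases le_or_gt 0 n with hn | hn
  · have h : (fun v : ℂ => (v - x) ^ n) = fun v : ℂ => (v - x) ^ n.toNat := by
      funext v; rw [← zpow_natCast, Int.toNat_of_nonneg hn]
    rw [h]
    exact (analyticAt_id.sub analyticAt_const).pow _
  · have h : (fun v : ℂ => (v - x) ^ n) = fun v : ℂ => ((v - x) ^ (-n).toNat)⁻¹ := by
      funext v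
      rw [← zpow_natCast, Int.toNat_of_nonneg (by omega : (0:ℤ) ≤ -n), zpow_neg, inv_inv]
    rw [h]
    exact ((analyticAt_id.sub analyticAt_const).pow _).inv
      (pow_ne_zero _ (sub_ne_zero.2 hw))

lemma eventually_mult_zero {h : ℂ → ℂ} (hm : MeromorphicOn h Set.univ) (x : ℂ) :
    ∀ᶠ w in nhdsWithin x {x}ᶜ, zeroMult h w = 0 ∧ poleMult h w = 0 := by
  have hx : MeromorphicAt h x := hm x trivial
  rcases eq_or_ne (meromorphicOrderAt h x) ⊤ with ho | hne
  · have he : ∀ᶠ w in nhdsWithin x {x}ᶜ, h w = 0 := meromorphicOrderAt_eq_top_iff.1 ho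
    obtain ⟨U, hUo, hxU, hU⟩ := mem_nhdsWithin.1 he
    have hmem : U ∩ {x}ᶜ ∈ nhdsWithin x {x}ᶜ :=
      inter_mem (nhdsWithin_le_nhds (hUo.mem_nhds hxU)) self_mem_nhdsWithin
    filter_upwards [eventually_mem_set.2 hmem] with w hw
    have hww : MeromorphicAt h w := hm w trivial
    have hord : meromorphicOrderAt h w = ⊤ := by
      apply meromorphicOrderAt_eq_top_iff.2
      have : U ∩ {x}ᶜ ∈ nhdsWithin w {w}ᶜ :=
        nhdsWithin_le_nhds ((hUo.inter isOpen_compl_singleton).mem_nhds hw)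
      filter_upwards [eventually_mem_set.2 this] with v hv
      exact hU hv
    rw [zeroMult_eq_of_mero hww, poleMult_eq_of_mero hww, hord]
    simp
  · obtain ⟨n, hn⟩ := WithTop.ne_top_iff_exists.1 hne
    obtain ⟨F, hF, hF0, heF⟩ := HasRep.exact_of_order_eq hx hn.symm
    obtain ⟨U, hUo, hxU, hFan, heq⟩ := HasRep.exists_open_rep hF heF
    obtain ⟨W, hWU, hWo, hxW⟩ := mem_nhds_iff.1 (hF.continuousAt.eventually_ne hF0)
    have hmem : (U ∩ W) ∩ {x}ᶜ ∈ nhdsWithin x {x}ᶜ :=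
      inter_mem (nhdsWithin_le_nhds (((hUo.inter hWo)).mem_nhds ⟨hxU, hxW⟩))
        self_mem_nhdsWithin
    filter_upwards [eventually_mem_set.2 hmem] with w hw
    obtain ⟨⟨hwU, hwW⟩, hwx'⟩ := hw
    have hwx : w ≠ x := hwx'
    have hww : MeromorphicAt h w := hm w trivial
    have hord : meromorphicOrderAt h w = (0 : ℤ) := by
      apply (meromorphicOrderAt_eq_int_iff hww).2
      refine ⟨fun v => (v - x) ^ n * F v,
        (analyticAt_zpow_shift hwx n).mul (hFan w hwU), ?_, ?_⟩
      · exact mul_ne_zero (zpow_ne_zero _ (sub_ne_zero.2 hwx)) (hWU hwW)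
      · have : (U ∩ W) ∩ {x}ᶜ ∈ nhdsWithin w {w}ᶜ :=
          nhdsWithin_le_nhds ((((hUo.inter hWo)).inter isOpen_compl_singleton).mem_nhds
            ⟨⟨hwU, hwW⟩, hwx⟩)
        filter_upwards [eventually_mem_set.2 this] with v hv
        obtain ⟨⟨hvU, _⟩, hvx'⟩ := hv
        rw [heq v hvU hvx']
        simp
    rw [zeroMult_eq_of_mero hww, poleMult_eq_of_mero hww, hord]
    simp

lemma locFin_mult {h : ℂ → ℂ} (hm : MeromorphicOn h Set.univ) :
    LocFin (fun z => zeroMult h z + poleMult h z) := by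
  intro R
  have key : ∀ x : ℂ, ∃ U : Set ℂ, IsOpen U ∧ x ∈ U ∧
      ∀ w ∈ U, w ≠ x → zeroMult h w = 0 ∧ poleMult h w = 0 := by
    intro x
    obtain ⟨U, hUo, hxU, hU⟩ := mem_nhdsWithin.1 (eventually_mult_zero hm x)
    exact ⟨U, hUo, hxU, fun w hw hwx => hU ⟨hw, hwx⟩⟩
  choose U hUo hxU hU using key
  obtain ⟨F, hF'⟩ := (isCompact_closedBall (0 : ℂ) R).elim_nhds_subcover U
    (fun x _ => (hUo x).mem_nhds (hxU x))
  have hF := hF'.2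
  apply Set.Finite.subset F.finite_toSet
  rintro z ⟨hz1, hz2⟩
  have hz2' : zeroMult h z + poleMult h z ≠ 0 := hz2
  have hzU := hF hz1
  rw [Set.mem_iUnion₂] at hzU
  obtain ⟨x, hxF, hzUx⟩ := hzU
  rcases eq_or_ne z x with rfl | hne
  · exact hxF
  · obtain ⟨e1, e2⟩ := hU x z hzUx hne
    omega

-- ===== smallness lemmas =====

lemma isSmall_zero (f : ℂ → ℂ) : IsSmall (fun _ => 0) f := by
  refine ⟨∅, by simp, ?_⟩
  have : (fun r : ℝ => (0 : ℝ) / charT f r) = fun _ => (0 : ℝ) := by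
    funext r; simp
  rw [this]
  exact tendsto_const_nhds

lemma isSmall_add {s₁ s₂ : ℝ → ℝ} {f : ℂ → ℂ} (h₁ : IsSmall s₁ f) (h₂ : IsSmall s₂ f) :
    IsSmall (fun r => s₁ r + s₂ r) f := by
  obtain ⟨E₁, hE₁, ht₁⟩ := h₁
  obtain ⟨E₂, hE₂, ht₂⟩ := h₂
  refine ⟨E₁ ∪ E₂, lt_of_le_of_lt (measure_union_le E₁ E₂) (ENNReal.add_lt_top.2 ⟨hE₁, hE₂⟩), ?_⟩
  have hle₁ : atTop ⊓ Filter.principal (E₁ ∪ E₂)ᶜ ≤ atTop ⊓ Filter.principal E₁ᶜ :=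
    inf_le_inf_left _ (principal_mono.2 (Set.compl_subset_compl.2 Set.subset_union_left))
  have hle₂ : atTop ⊓ Filter.principal (E₁ ∪ E₂)ᶜ ≤ atTop ⊓ Filter.principal E₂ᶜ :=
    inf_le_inf_left _ (principal_mono.2 (Set.compl_subset_compl.2 Set.subset_union_right))
  have heq : (fun r => (s₁ r + s₂ r) / charT f r) =
      fun r => s₁ r / charT f r + s₂ r / charT f r := by
    funext r; rw [add_div]
  rw [heq]
  simpa using (ht₁.mono_left hle₁).add (ht₂.mono_left hle₂)

lemma isSmall_sum {ι : Type*} (s : Finset ι) (σ : ι → ℝ → ℝ) (f : ℂ → ℂ)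
    (h : ∀ i ∈ s, IsSmall (σ i) f) :
    IsSmall (fun r => ∑ i ∈ s, σ i r) f := by
  classical
  induction s using Finset.induction_on with
  | empty => simpa using isSmall_zero f
  | insert _ _ hni ih =>
      rename_i a s
      have := isSmall_add (h a (Finset.mem_insert_self a s))
        (ih fun i hi => h i (Finset.mem_insert_of_mem hi))
      have heq : (fun r => ∑ i ∈ insert a s, σ i r) =
          fun r => σ a r + ∑ i ∈ s, σ i r := by
        funext r; rw [Finset.sum_insert hni]
      rw [heq]
      exact this

lemma prox_nonneg (g : ℂ → ℂ) (r : ℝ) : 0 ≤ prox g r := by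
  apply mul_nonneg
  · rw [inv_nonneg]
    positivity
  · apply intervalIntegral.integral_nonneg (by positivity)
    intro u _
    exact le_max_right _ _

lemma Npole_le_charT (g : ℂ → ℂ) (r : ℝ) : Npole g r ≤ charT g r := by
  rw [charT]
  linarith [prox_nonneg g r]


/-- pole counting function of `P[f]/f^{d̄(P)}`. -/
theorem pole_counting_diffPoly_div_pow
    (f : ℂ → ℂ) (hf : NonconstMero f)
    {t k : ℕ} (b : Fin t → ℂ → ℂ) (M : Fin t → Fin (k + 1) → ℕ)
    (hbmero : ∀ j, MeromorphicOn (b j) Set.univ)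
    (hbsmall : ∀ j, IsSmallFunction (b j) f)
    (dbar : ℕ)
    (hdbar : (∀ j, monoDeg (M j) ≤ dbar) ∧ ∃ j, monoDeg (M j) = dbar)
    (dlow : ℕ)
    (hdlow : (∀ j, dlow ≤ monoDeg (M j)) ∧ ∃ j, monoDeg (M j) = dlow)
    (Γ : ℕ)
    (hΓ : (∀ j, monoWt (M j) ≤ Γ) ∧ ∃ j, monoWt (M j) = Γ)
    (hord : ∃ j, M j (Fin.last k) ≠ 0)
    (μ : ℕ)
    (hμ : (∀ j, monoWt (M j) - monoDeg (M j) ≤ μ) ∧ ∃ j, monoWt (M j) - monoDeg (M j) = μ)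
    :
    ∃ s : ℝ → ℝ, IsSmall s f ∧ ∀ r : ℝ, 1 ≤ r →
      Npole (fun z => diffPoly b M f z / f z ^ dbar) r
        ≤ ((Γ : ℝ) - dbar) * NpoleRed f r
          + ((dbar : ℝ) - dlow) * NzeroGe f (k + 1) r
          + (μ : ℝ) * NzeroRedGe f (k + 1) r
          + (dbar : ℝ) * NzeroLe f k r + s r := by
  classical
  obtain ⟨hfm, -⟩ := hf
  -- basic numeric facts
  have hdbar1 : 1 ≤ dbar := by
    obtain ⟨j0, hj0⟩ := hord
    have h1 : M j0 (Fin.last k) ≤ monoDeg (M j0) := by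
      rw [monoDeg]
      exact Finset.single_le_sum (f := fun i => M j0 i) (fun i _ => Nat.zero_le _)
        (Finset.mem_univ (Fin.last k))
    have := hdbar.1 j0
    omega
  have hld : dlow ≤ dbar := by
    obtain ⟨j2, hj2⟩ := hdbar.2
    have := hdlow.1 j2
    omega
  have hΓd : dbar ≤ Γ := by
    obtain ⟨j2, hj2⟩ := hdbar.2
    have h1 := monoDeg_le_monoWt (M j2)
    have h2 := hΓ.1 j2
    omega
  -- local finiteness
  have hLf : LocFin (fun z => zeroMult f z + poleMult f z) := locFin_mult hfm
  have hLb : ∀ j, LocFin (fun z => zeroMult (b j) z + poleMult (b j) z) :=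
    fun j => locFin_mult (hbmero j)
  have hL1 : LocFin (fun z => min 1 (poleMult f z)) :=
    LocFin.of_le hLf (fun z => by omega)
  have hL2 : LocFin (fun z => if k + 1 ≤ zeroMult f z then zeroMult f z else 0) :=
    LocFin.of_le hLf (fun z => by split <;> omega)
  have hL3 : LocFin (fun z => if k + 1 ≤ zeroMult f z then 1 else 0) :=
    LocFin.of_le hLf (fun z => by split <;> omega)
  have hL4 : LocFin (fun z => if zeroMult f z ≤ k then zeroMult f z else 0) :=
    LocFin.of_le hLf (fun z => by split <;> omega)
  have hLbj : ∀ j, LocFin (fun z => poleMult (b j) z) :=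
    fun j => LocFin.of_le (hLb j) (fun z => by omega)
  have hLsum : LocFin (fun z => ∑ j, poleMult (b j) z) :=
    LocFin.sum Finset.univ _ hLbj
  -- the right-hand side multiplicity function
  have hLa : LocFin (fun z => (Γ - dbar) * min 1 (poleMult f z)) := hL1.mul (Γ - dbar)
  have hLb2 : LocFin (fun z =>
      (dbar - dlow) * (if k + 1 ≤ zeroMult f z then zeroMult f z else 0)) :=
    hL2.mul (dbar - dlow)
  have hLc : LocFin (fun z => μ * (if k + 1 ≤ zeroMult f z then 1 else 0)) := hL3.mul μ
  have hLd : LocFin (fun z => dbar * (if zeroMult f z ≤ k then zeroMult f z else 0)) :=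
    hL4.mul dbar
  have hLab : LocFin (fun z => (Γ - dbar) * min 1 (poleMult f z)
      + (dbar - dlow) * (if k + 1 ≤ zeroMult f z then zeroMult f z else 0)) :=
    hLa.add hLb2
  have hLabc : LocFin (fun z => (Γ - dbar) * min 1 (poleMult f z)
      + (dbar - dlow) * (if k + 1 ≤ zeroMult f z then zeroMult f z else 0)
      + μ * (if k + 1 ≤ zeroMult f z then 1 else 0)) := hLab.add hLc
  have hLabcd : LocFin (fun z => (Γ - dbar) * min 1 (poleMult f z)
      + (dbar - dlow) * (if k + 1 ≤ zeroMult f z then zeroMult f z else 0)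
      + μ * (if k + 1 ≤ zeroMult f z then 1 else 0)
      + dbar * (if zeroMult f z ≤ k then zeroMult f z else 0)) := hLabc.add hLd
  have hLR : LocFin (fun z => (Γ - dbar) * min 1 (poleMult f z)
      + (dbar - dlow) * (if k + 1 ≤ zeroMult f z then zeroMult f z else 0)
      + μ * (if k + 1 ≤ zeroMult f z then 1 else 0)
      + dbar * (if zeroMult f z ≤ k then zeroMult f z else 0)
      + ∑ j, poleMult (b j) z) := hLabcd.add hLsum
  -- the pointwise bound
  have hle : ∀ z, poleMult (fun w => diffPoly b M f w / f w ^ dbar) z ≤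
      (Γ - dbar) * min 1 (poleMult f z)
      + (dbar - dlow) * (if k + 1 ≤ zeroMult f z then zeroMult f z else 0)
      + μ * (if k + 1 ≤ zeroMult f z then 1 else 0)
      + dbar * (if zeroMult f z ≤ k then zeroMult f z else 0)
      + ∑ j, poleMult (b j) z :=
    fun z => pointwise_bound f hfm b M hbmero dbar dlow Γ μ
      hdbar.1 hdlow.1 hΓ.1 hμ.1 hdbar1 hld hΓd z
  have hLL : LocFin (poleMult (fun w => diffPoly b M f w / f w ^ dbar)) :=
    LocFin.of_le hLR hle
  refine ⟨fun r => ∑ j, charT (b j) r,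
    isSmall_sum Finset.univ (fun j => charT (b j)) f (fun j _ => hbsmall j), ?_⟩
  intro r hr
  have hr0 : (0 : ℝ) ≤ r := by linarith
  -- step 1 : monotonicity
  have step1 : Npole (fun z => diffPoly b M f z / f z ^ dbar) r ≤
      NCount (fun z => (Γ - dbar) * min 1 (poleMult f z)
        + (dbar - dlow) * (if k + 1 ≤ zeroMult f z then zeroMult f z else 0)
        + μ * (if k + 1 ≤ zeroMult f z then 1 else 0)
        + dbar * (if zeroMult f z ≤ k then zeroMult f z else 0)
        + ∑ j, poleMult (b j) z) r :=
    NCount_mono hLL hLR hle hr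
  -- step 2 : split the right-hand side
  have e1 : NCount (fun z => (Γ - dbar) * min 1 (poleMult f z)
        + (dbar - dlow) * (if k + 1 ≤ zeroMult f z then zeroMult f z else 0)
        + μ * (if k + 1 ≤ zeroMult f z then 1 else 0)
        + dbar * (if zeroMult f z ≤ k then zeroMult f z else 0)
        + ∑ j, poleMult (b j) z) r =
      NCount (fun z => (Γ - dbar) * min 1 (poleMult f z)
        + (dbar - dlow) * (if k + 1 ≤ zeroMult f z then zeroMult f z else 0)
        + μ * (if k + 1 ≤ zeroMult f z then 1 else 0)
        + dbar * (if zeroMult f z ≤ k then zeroMult f z else 0)) r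
      + NCount (fun z => ∑ j, poleMult (b j) z) r :=
    NCount_add hLabcd hLsum hr0
  have e2 : NCount (fun z => (Γ - dbar) * min 1 (poleMult f z)
        + (dbar - dlow) * (if k + 1 ≤ zeroMult f z then zeroMult f z else 0)
        + μ * (if k + 1 ≤ zeroMult f z then 1 else 0)
        + dbar * (if zeroMult f z ≤ k then zeroMult f z else 0)) r =
      NCount (fun z => (Γ - dbar) * min 1 (poleMult f z)
        + (dbar - dlow) * (if k + 1 ≤ zeroMult f z then zeroMult f z else 0)
        + μ * (if k + 1 ≤ zeroMult f z then 1 else 0)) r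
      + NCount (fun z => dbar * (if zeroMult f z ≤ k then zeroMult f z else 0)) r :=
    NCount_add hLabc hLd hr0
  have e3 : NCount (fun z => (Γ - dbar) * min 1 (poleMult f z)
        + (dbar - dlow) * (if k + 1 ≤ zeroMult f z then zeroMult f z else 0)
        + μ * (if k + 1 ≤ zeroMult f z then 1 else 0)) r =
      NCount (fun z => (Γ - dbar) * min 1 (poleMult f z)
        + (dbar - dlow) * (if k + 1 ≤ zeroMult f z then zeroMult f z else 0)) r
      + NCount (fun z => μ * (if k + 1 ≤ zeroMult f z then 1 else 0)) r :=
    NCount_add hLab hLc hr0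
  have e4 : NCount (fun z => (Γ - dbar) * min 1 (poleMult f z)
        + (dbar - dlow) * (if k + 1 ≤ zeroMult f z then zeroMult f z else 0)) r =
      NCount (fun z => (Γ - dbar) * min 1 (poleMult f z)) r
      + NCount (fun z =>
          (dbar - dlow) * (if k + 1 ≤ zeroMult f z then zeroMult f z else 0)) r :=
    NCount_add hLa hLb2 hr0
  have m1 : NCount (fun z => (Γ - dbar) * min 1 (poleMult f z)) r =
      ((Γ - dbar : ℕ) : ℝ) * NpoleRed f r := NCount_nsmul (Γ - dbar) hL1 hr0
  have m2 : NCount (fun z =>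
        (dbar - dlow) * (if k + 1 ≤ zeroMult f z then zeroMult f z else 0)) r =
      ((dbar - dlow : ℕ) : ℝ) * NzeroGe f (k + 1) r := NCount_nsmul (dbar - dlow) hL2 hr0
  have m3 : NCount (fun z => μ * (if k + 1 ≤ zeroMult f z then 1 else 0)) r =
      (μ : ℝ) * NzeroRedGe f (k + 1) r := NCount_nsmul μ hL3 hr0
  have m4 : NCount (fun z => dbar * (if zeroMult f z ≤ k then zeroMult f z else 0)) r =
      (dbar : ℝ) * NzeroLe f k r := NCount_nsmul dbar hL4 hr0
  have m5 : NCount (fun z => ∑ j, poleMult (b j) z) r = ∑ j, Npole (b j) r :=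
    NCount_sum Finset.univ (fun j => poleMult (b j)) hLbj hr0
  have hlast : ∑ j, Npole (b j) r ≤ ∑ j, charT (b j) r :=
    Finset.sum_le_sum (fun j _ => Npole_le_charT (b j) r)
  have c1 : ((Γ - dbar : ℕ) : ℝ) = (Γ : ℝ) - dbar := by
    rw [Nat.cast_sub hΓd]
  have c2 : ((dbar - dlow : ℕ) : ℝ) = (dbar : ℝ) - dlow := by
    rw [Nat.cast_sub hld]
  rw [e1, e2, e3, e4, m1, m2, m3, m4, m5, c1, c2] at step1
  linarith
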